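/- Let X be a normed space, let y : [0, ∞) → [0, ∞) be absolutely continuous, and let D₁, D₂ : [0,∞) → [0,∞) be integrable on compacts. Suppose there is C > 0 such that whenever y(t) ≤ 4ε² on an interval, one has (1/2) y'(t) + D₁(t) + D₂(t) ≤ 2Cε (D₁(t) + D₂(t)) a.e. on that interval. If ε < 1/(4C) and y(0) < 2ε², then y(t) ≤ y(0) < 2ε² for all t ≥ 0. -/
import Mathlib


open MeasureTheory

/-- Bootstrap argument: let `y : [0,∞) → [0,∞)` be continuous and absolutely continuous
(with a.e. derivative `y'` and the fundamental theorem of calculus `y t = y 0 + ∫₀^t y'`),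
and let `D₁, D₂ ≥ 0` be locally integrable. Suppose `C > 0` is such that, at (a.e.) any
time where `y ≤ 4ε²`, one has `(1/2) y' + D₁ + D₂ ≤ 2Cε(D₁ + D₂)`. If `ε < 1/(4C)` and
`y 0 < 2ε²`, then `y t ≤ y 0 < 2ε²` for all `t ≥ 0`. -/
theorem stmt_13 (y y' D₁ D₂ : ℝ → ℝ) (C ε : ℝ) (hC : 0 < C) (hε : 0 < ε)
    (hy_cont : ContinuousOn y (Set.Ici (0:ℝ)))
    (hy_nonneg : ∀ t ≥ (0:ℝ), 0 ≤ y t)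
    (hftc : ∀ t ≥ (0:ℝ), y t = y 0 + ∫ s in (0:ℝ)..t, y' s)
    (hy'_int : ∀ t ≥ (0:ℝ), IntervalIntegrable y' volume 0 t)
    (hD₁_nonneg : ∀ t ≥ (0:ℝ), 0 ≤ D₁ t) (hD₂_nonneg : ∀ t ≥ (0:ℝ), 0 ≤ D₂ t)
    (hD₁_int : ∀ t ≥ (0:ℝ), IntervalIntegrable D₁ volume 0 t)
    (hD₂_int : ∀ t ≥ (0:ℝ), IntervalIntegrable D₂ volume 0 t)
    (hineq : ∀ᵐ t ∂(volume.restrict (Set.Ici (0:ℝ))),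
      y t ≤ 4 * ε ^ 2 →
        (1 / 2) * y' t + D₁ t + D₂ t ≤ 2 * C * ε * (D₁ t + D₂ t))
    (hεC : ε < 1 / (4 * C)) (hy0 : y 0 < 2 * ε ^ 2) :
    ∀ t ≥ (0:ℝ), y t ≤ y 0 := by
  have h4Cε : 4 * C * ε < 1 := by
    have h4C : (0:ℝ) < 4 * C := by linarith
    calc 4 * C * ε < 4 * C * (1 / (4 * C)) := by
          exact mul_lt_mul_of_pos_left hεC h4C
      _ = 1 := by field_simp
  -- key monotonicity lemma
  have key : ∀ u ≥ (0:ℝ), (∀ s ∈ Set.Icc (0:ℝ) u, y s ≤ 4 * ε ^ 2) → y u ≤ y 0 := by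
    intro u hu hsmall
    rw [hftc u hu]
    have hae : ∀ᵐ s ∂(volume.restrict (Set.Icc (0:ℝ) u)), 0 ≤ -y' s := by
      have h1 : ∀ᵐ s ∂(volume.restrict (Set.Icc (0:ℝ) u)),
          y s ≤ 4 * ε ^ 2 →
            (1 / 2) * y' s + D₁ s + D₂ s ≤ 2 * C * ε * (D₁ s + D₂ s) :=
        ae_restrict_of_ae_restrict_of_subset (fun s hs => hs.1) hineq
      have h2 : ∀ᵐ s ∂(volume.restrict (Set.Icc (0:ℝ) u)), s ∈ Set.Icc (0:ℝ) u :=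
        (ae_restrict_iff' measurableSet_Icc).mpr (ae_of_all _ fun s hs => hs)
      filter_upwards [h1, h2] with s h1 hs
      have hy := h1 (hsmall s hs)
      have hD1 := hD₁_nonneg s hs.1
      have hD2 := hD₂_nonneg s hs.1
      nlinarith
    have : 0 ≤ ∫ s in (0:ℝ)..u, -y' s :=
      intervalIntegral.integral_nonneg_of_ae_restrict hu hae
    rw [intervalIntegral.integral_neg] at this
    linarith
  intro t ht
  -- bootstrap: show y ≤ 2ε² on [0, t]
  set A : Set ℝ := {u | u ∈ Set.Icc (0:ℝ) t ∧ ∀ s ∈ Set.Icc (0:ℝ) u, y s ≤ 2 * ε ^ 2}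
    with hA
  have h0A : (0:ℝ) ∈ A := by
    refine ⟨⟨le_refl _, ht⟩, fun s hs => ?_⟩
    have : s = 0 := le_antisymm hs.2 hs.1
    rw [this]; linarith
  have hbdd : BddAbove A := ⟨t, fun u hu => hu.1.2⟩
  set c := sSup A with hc
  have hc0 : 0 ≤ c := le_csSup hbdd h0A
  have hct : c ≤ t := csSup_le ⟨0, h0A⟩ fun u hu => hu.1.2
  have hbelow : ∀ s, 0 ≤ s → s < c → y s ≤ 2 * ε ^ 2 := by
    intro s hs0 hsc
    obtain ⟨u, huA, hsu⟩ := exists_lt_of_lt_csSup ⟨0, h0A⟩ hsc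
    exact huA.2 s ⟨hs0, hsu.le⟩
  have hcA : c ∈ A := by
    refine ⟨⟨hc0, hct⟩, fun s hs => ?_⟩
    rcases lt_or_eq_of_le hs.2 with h | h
    · exact hbelow s hs.1 h
    · subst h
      rcases eq_or_lt_of_le hc0 with h0 | h0
      · rw [← h0]; linarith
      · -- continuity from the left
        have hcont : Filter.Tendsto y (nhdsWithin c (Set.Ico 0 c)) (nhds (y c)) :=
          ((hy_cont c (by exact hc0)).mono (fun x hx => hx.1)).tendsto
        have hne : (nhdsWithin c (Set.Ico 0 c)).NeBot := right_nhdsWithin_Ico_neBot h0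
        refine le_of_tendsto hcont ?_
        filter_upwards [self_mem_nhdsWithin] with x hx
        exact hbelow x hx.1 hx.2
  -- c = t
  have hct' : c = t := by
    by_contra hne
    have hclt : c < t := lt_of_le_of_ne hct hne
    -- y c ≤ y 0 < 2ε² strictly
    have hyc : y c < 2 * ε ^ 2 := by
      have := key c hc0 (fun s hs => le_trans (hcA.2 s hs) (by nlinarith))
      linarith
    have hcont : ContinuousWithinAt y (Set.Ici 0) c := hy_cont c hc0
    have hev : ∀ᶠ x in nhdsWithin c (Set.Ici 0), y x < 2 * ε ^ 2 :=
      hcont.eventually_lt_const hyc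
    obtain ⟨δ, hδ, hδ'⟩ := Metric.mem_nhdsWithin_iff.mp hev
    set u := min t (c + δ / 2) with hu
    have hcu : c < u := lt_min hclt (by linarith)
    have huA : u ∈ A := by
      refine ⟨⟨by linarith, min_le_left _ _⟩, fun s hs => ?_⟩
      rcases le_or_gt s c with h | h
      · exact hcA.2 s ⟨hs.1, h⟩
      · have hsu : s ≤ c + δ / 2 := le_trans hs.2 (min_le_right _ _)
        have hmem : s ∈ Metric.ball c δ ∩ Set.Ici (0:ℝ) := by
          constructor
          · rw [Metric.mem_ball, Real.dist_eq, abs_of_pos (by linarith)]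
            linarith
          · exact hs.1
        exact (hδ' hmem).le
    exact absurd (le_csSup hbdd huA) (not_le.mpr hcu)
  -- conclude
  exact key t ht fun s hs => le_trans (hcA.2 s (hct' ▸ hs)) (by nlinarith)
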